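/- Let q be an odd prime power with q ≢ 1 (mod 4) and q ≢ 1 (mod 3). For the C2F2 pencil X_ψ : x₀³x₁ + x₁⁴ + x₂⁴ + x₃⁴ = 12ψ x₀x₁x₂x₃ in ℙ³ over F_q, the number of points with at least one zero coordinate is #X_ψ(F_q) − #U_ψ(F_q) = 3q + 1, where U_ψ is the intersection of X_ψ with the open torus. -/

import Mathlib

/-- The defining polynomial of the `C2F2` pencil
`x₀³x₁ + x₁⁴ + x₂⁴ + x₃⁴ - 12ψx₀x₁x₂x₃`. -/
def fC2F2 {F : Type} [Field F] (ψ : F) (x : Fin 4 → F) : F :=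
  x 0 ^ 3 * x 1 + x 1 ^ 4 + x 2 ^ 4 + x 3 ^ 4 -
    12 * ψ * (x 0 * x 1 * x 2 * x 3)

namespace C2F2Aux

set_option linter.unusedSectionVars false

variable {F : Type} [Field F] [Fintype F]


lemma neg_one_not_square (hodd : Odd (Fintype.card F)) (h4 : Fintype.card F % 4 ≠ 1) :
    ¬ IsSquare (-1 : F) := by
  intro h
  apply FiniteField.isSquare_neg_one_iff.mp h
  obtain ⟨k, hk⟩ := hodd
  omega

lemma sq_add_sq_zero (hns : ¬ IsSquare (-1 : F)) {a b : F} (h : a ^ 2 + b ^ 2 = 0) :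
    a = 0 ∧ b = 0 := by
  by_cases hb : b = 0
  · subst hb
    simp only [ne_eq, OfNat.ofNat_ne_zero, not_false_eq_true, zero_pow, add_zero] at h
    exact ⟨pow_eq_zero_iff (by norm_num) |>.mp h, rfl⟩
  · exfalso
    apply hns
    refine ⟨a / b, ?_⟩
    rw [div_mul_div_comm]
    rw [eq_div_iff (by simpa using mul_ne_zero hb hb)]
    linear_combination -h

lemma pow4_add_pow4_zero (hns : ¬ IsSquare (-1 : F)) {a b : F} (h : a ^ 4 + b ^ 4 = 0) :
    a = 0 ∧ b = 0 := by
  have h2 := sq_add_sq_zero hns (a := a ^ 2) (b := b ^ 2) (by linear_combination h)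
  exact ⟨pow_eq_zero_iff (by norm_num) |>.mp h2.1, pow_eq_zero_iff (by norm_num) |>.mp h2.2⟩

lemma cube_bij (h3 : Fintype.card F % 3 ≠ 1) : Function.Bijective (fun x : F => x ^ 3) := by
  have hq : 1 ≤ Fintype.card F := Fintype.card_pos
  have hcop : Nat.Coprime 3 (Fintype.card F - 1) := by
    rw [Nat.Prime.coprime_iff_not_dvd (by norm_num)]
    omega
  rw [Fintype.bijective_iff_injective_and_card]
  refine ⟨fun x y hxy => ?_, rfl⟩
  simp only at hxy
  by_cases hy : y = 0
  · subst hy; simpa using pow_eq_zero_iff (n := 3) (by norm_num) |>.mp (by simpa using hxy)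
  by_cases hx : x = 0
  · exfalso
    exact hy (pow_eq_zero_iff (n := 3) (by norm_num) |>.mp
      (by rw [hx] at hxy; simpa using hxy.symm))
  · have hu : (Units.mk0 x hx * (Units.mk0 y hy)⁻¹) ^ 3 = 1 := by
      ext
      push_cast
      field_simp
      rw [Units.val_mk0, Units.val_mk0, div_eq_one_iff_eq (pow_ne_zero 3 hy)]
      exact hxy
    have hdvd : orderOf (Units.mk0 x hx * (Units.mk0 y hy)⁻¹) ∣ 3 := orderOf_dvd_of_pow_eq_one hu
    have hdvd2 : orderOf (Units.mk0 x hx * (Units.mk0 y hy)⁻¹) ∣ Fintype.card F - 1 := by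
      have := orderOf_dvd_natCard (Units.mk0 x hx * (Units.mk0 y hy)⁻¹)
      rwa [Nat.card_units, Nat.card_eq_fintype_card] at this
    have : orderOf (Units.mk0 x hx * (Units.mk0 y hy)⁻¹) = 1 :=
      Nat.eq_one_of_dvd_one (Nat.dvd_gcd hdvd hdvd2 |>.trans (by rw [hcop]))
    have := orderOf_eq_one_iff.mp this
    have : Units.mk0 x hx = Units.mk0 y hy := by
      rwa [mul_inv_eq_one] at this
    simpa using congrArg Units.val this

lemma exists_sq_add_sq (hodd : Odd (Fintype.card F)) (x : F) : ∃ a b : F, a ^ 2 + b ^ 2 = x := by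
  obtain ⟨a, b, hab⟩ := FiniteField.exists_root_sum_quadratic
    (f := Polynomial.X ^ 2) (g := Polynomial.X ^ 2 - Polynomial.C x)
    (by simp [Polynomial.degree_X_pow]) (Polynomial.degree_X_pow_sub_C (by norm_num) x)
    (by obtain ⟨k, hk⟩ := hodd; omega)
  refine ⟨a, b, ?_⟩
  simp only [Polynomial.eval_pow, Polynomial.eval_X, Polynomial.eval_sub, Polynomial.eval_C] at hab
  linear_combination hab

open Classical in
noncomputable def beta (x : F) : F := if IsSquare x then x ^ 2 else -x ^ 2

lemma beta_sq (x : F) : beta x ^ 2 = x ^ 4 := by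
  unfold beta; split_ifs <;> ring

lemma beta_zero : beta (0 : F) = 0 := by
  unfold beta; rw [if_pos ⟨0, by simp⟩]; simp

lemma beta_eq_zero_iff {x : F} : beta x = 0 ↔ x = 0 := by
  constructor
  · intro h
    have : x ^ 4 = 0 := by rw [← beta_sq, h]; simp
    exact pow_eq_zero_iff (by norm_num) |>.mp this
  · rintro rfl; exact beta_zero

lemma beta_inj (hns : ¬ IsSquare (-1 : F)) : Function.Injective (beta (F := F)) := by
  classical
  intro x y h
  unfold beta at h
  have key : ∀ u v : F, IsSquare u → IsSquare v → u ^ 2 = v ^ 2 → u = v := by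
    intro u v hu hv huv
    rcases sq_eq_sq_iff_eq_or_eq_neg.mp huv with h1 | h1
    · exact h1
    · by_cases hv0 : v = 0
      · rw [hv0, neg_zero] at h1; rw [h1, hv0]
      · exfalso
        apply hns
        obtain ⟨r, hr⟩ := hu
        obtain ⟨s, hs⟩ := hv
        have hs0 : s ≠ 0 := fun h0 => hv0 (by rw [hs, h0, mul_zero])
        have key2 : (r / s) * (r / s) = -1 := by
          rw [div_mul_div_comm, div_eq_iff (mul_ne_zero hs0 hs0)]
          linear_combination h1 - hr - hs
        exact ⟨r / s, key2.symm⟩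
  split_ifs at h with hx hy hy
  · exact key x y hx hy h
  · exfalso
    exact hy ((sq_add_sq_zero hns (a := x) (b := y) (by linear_combination h)).2 ▸ ⟨0, by simp⟩)
  · exfalso
    exact hx ((sq_add_sq_zero hns (a := y) (b := x) (by linear_combination -h)).2 ▸ ⟨0, by simp⟩)
  · have h' : x ^ 2 = y ^ 2 := by linear_combination -h
    rcases sq_eq_sq_iff_eq_or_eq_neg.mp h' with h1 | h1
    · exact h1
    · exfalso
      by_cases hx0 : x = 0
      · exact hx (hx0 ▸ ⟨0, by simp⟩)
      · have hy0 : y ≠ 0 := fun h0 => hx0 (by rw [h1, h0, neg_zero])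
        have hc : quadraticChar F (x * y) = 1 := by
          rw [map_mul, quadraticChar_neg_one_iff_not_isSquare.mpr hx,
            quadraticChar_neg_one_iff_not_isSquare.mpr hy]
          ring
        have hmul : IsSquare (x * y) := (quadraticChar_one_iff_isSquare (mul_ne_zero hx0 hy0)).mp hc
        rw [h1] at hmul
        obtain ⟨r, hr⟩ := hmul
        apply hns
        refine ⟨r / y, ?_⟩
        rw [div_mul_div_comm, eq_div_iff (mul_ne_zero hy0 hy0)]
        linear_combination hr

def nrm (p : F × F) : F := p.1 ^ 2 + p.2 ^ 2
def pmul (p q : F × F) : F × F := (p.1 * q.1 - p.2 * q.2, p.1 * q.2 + p.2 * q.1)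
noncomputable def pinv (p : F × F) : F × F := (p.1 / nrm p, -(p.2 / nrm p))

lemma nrm_pmul (p q : F × F) : nrm (pmul p q) = nrm p * nrm q := by
  simp only [nrm, pmul]; ring

lemma pinv_pmul {p : F × F} (h : nrm p ≠ 0) (x : F × F) : pmul (pinv p) (pmul p x) = x := by
  have h' : p.1 ^ 2 + p.2 ^ 2 ≠ 0 := h
  simp only [pmul, pinv, nrm] at *
  ext <;> field_simp <;> ring

lemma pmul_pinv {p : F × F} (h : nrm p ≠ 0) (x : F × F) : pmul p (pmul (pinv p) x) = x := by
  have h' : p.1 ^ 2 + p.2 ^ 2 ≠ 0 := h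
  simp only [pmul, pinv, nrm] at *
  ext <;> field_simp <;> ring

lemma card_W (hodd : Odd (Fintype.card F)) (hns : ¬ IsSquare (-1 : F)) :
    Nat.card {p : F × F // nrm p = -1} = Fintype.card F + 1 := by
  classical
  -- section
  have hsec : ∀ e : Fˣ, ∃ p : F × F, nrm p = -(e : F) := by
    intro e
    obtain ⟨a, b, hab⟩ := exists_sq_add_sq hodd (-(e : F))
    exact ⟨(a, b), hab⟩
  choose s hs using hsec
  have hsne : ∀ e : Fˣ, nrm (s e) ≠ 0 := by
    intro e
    rw [hs e]
    simpa using e.ne_zero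
  -- the map
  set W := {p : F × F // nrm p = -1} with hW
  set U := {p : F × F // nrm p ≠ 0} with hU
  have hΦ : ∀ (e : Fˣ) (w : W), nrm (pmul (s e) w.1) ≠ 0 := by
    intro e w
    rw [nrm_pmul, hs e, w.2]
    simpa using e.ne_zero
  let Φ : Fˣ × W → U := fun ew => ⟨pmul (s ew.1) ew.2.1, hΦ ew.1 ew.2⟩
  have hbij : Function.Bijective Φ := by
    constructor
    · rintro ⟨e, w⟩ ⟨e', w'⟩ hh
      have h1 : pmul (s e) w.1 = pmul (s e') w'.1 := congrArg Subtype.val hh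
      have h2 : nrm (pmul (s e) w.1) = nrm (pmul (s e') w'.1) := by rw [h1]
      rw [nrm_pmul, nrm_pmul, hs, hs, w.2, w'.2] at h2
      have he : e = e' := by
        ext
        have := h2
        field_simp at this
        exact this
      subst he
      have : w.1 = w'.1 := by
        have := congrArg (pmul (pinv (s e))) h1
        rwa [pinv_pmul (hsne e), pinv_pmul (hsne e)] at this
      exact Prod.ext rfl (Subtype.ext this)
    · rintro ⟨p, hp⟩
      set e : Fˣ := Units.mk0 (nrm p) hp with he
      refine ⟨⟨e, ⟨pmul (pinv (s e)) p, ?_⟩⟩, ?_⟩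
      · have hinv : nrm (pinv (s e)) = (nrm (s e))⁻¹ := by
          have h' : (s e).1 ^ 2 + (s e).2 ^ 2 ≠ 0 := hsne e
          simp only [pinv, nrm] at *
          field_simp
        rw [nrm_pmul, hinv, hs e]
        rw [he]
        simp only [Units.val_mk0]
        field_simp
      · apply Subtype.ext
        exact pmul_pinv (hsne e) p
  -- cardinalities
  have hcardU : Nat.card U = Fintype.card F * Fintype.card F - 1 := by
    have hequiv : U ≃ {p : F × F // ¬ p = 0} :=
      Equiv.subtypeEquivRight (fun p => by
        constructor
        · intro hn h0; rw [h0] at hn; exact hn (by simp [nrm])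
        · intro hne hn
          obtain ⟨h1, h2⟩ := sq_add_sq_zero hns hn
          exact hne (Prod.ext h1 h2))
    rw [Nat.card_congr hequiv, Nat.card_eq_fintype_card, Fintype.card_subtype_compl,
      Fintype.card_subtype_eq, Fintype.card_prod]
  have hcardProd : Nat.card (Fˣ × W) = (Fintype.card F - 1) * Nat.card W := by
    rw [Nat.card_prod, Nat.card_units, Nat.card_eq_fintype_card]
  have hmain : (Fintype.card F - 1) * Nat.card W = Fintype.card F * Fintype.card F - 1 := by
    rw [← hcardProd, Nat.card_eq_of_bijective Φ hbij, hcardU]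
  have h2 : 2 ≤ Fintype.card F := Fintype.one_lt_card
  obtain ⟨k, hk⟩ : ∃ k, Fintype.card F = k + 2 := ⟨Fintype.card F - 2, (Nat.sub_add_cancel h2).symm⟩
  rw [hk] at hmain ⊢
  have hrr : (k + 2) * (k + 2) - 1 = (k + 1) * (k + 3) := by
    have : (k + 1) * (k + 3) + 1 = (k + 2) * (k + 2) := by ring
    omega
  rw [hrr] at hmain
  have hsub : k + 2 - 1 = k + 1 := by omega
  rw [hsub] at hmain
  have := Nat.eq_of_mul_eq_mul_left (show 0 < k + 1 by omega) hmain
  omega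

lemma W_coords_ne {p : F × F} (hns : ¬ IsSquare (-1 : F)) (hp : nrm p = -1) :
    p.1 ≠ 0 ∧ p.2 ≠ 0 := by
  unfold nrm at hp
  constructor
  · rintro h0
    rw [h0] at hp
    exact hns ⟨p.2, by linear_combination -hp⟩
  · rintro h0
    rw [h0] at hp
    exact hns ⟨p.1, by linear_combination -hp⟩

lemma card_T2 (hodd : Odd (Fintype.card F)) (hns : ¬ IsSquare (-1 : F)) :
    Nat.card {v : F × F × F // v.1 ≠ 0 ∧ v.2.1 ≠ 0 ∧ v.2.2 ≠ 0 ∧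
      v.1 ^ 2 + v.2.1 ^ 2 + v.2.2 ^ 2 = 0} =
    (Fintype.card F - 1) * (Fintype.card F + 1) := by
  classical
  set T2 := {v : F × F × F // v.1 ≠ 0 ∧ v.2.1 ≠ 0 ∧ v.2.2 ≠ 0 ∧
      v.1 ^ 2 + v.2.1 ^ 2 + v.2.2 ^ 2 = 0} with hT2
  have hmem : ∀ (u : Fˣ) (w : {p : F × F // nrm p = -1}),
      ((u : F) * w.1.1 ≠ 0 ∧ (u : F) * w.1.2 ≠ 0 ∧ (u : F) ≠ 0 ∧
        ((u : F) * w.1.1) ^ 2 + ((u : F) * w.1.2) ^ 2 + (u : F) ^ 2 = 0) := by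
    intro u w
    obtain ⟨h1, h2⟩ := W_coords_ne hns w.2
    have hn : w.1.1 ^ 2 + w.1.2 ^ 2 = -1 := w.2
    refine ⟨mul_ne_zero u.ne_zero h1, mul_ne_zero u.ne_zero h2, u.ne_zero, ?_⟩
    linear_combination (u : F) ^ 2 * hn
  let Φ : Fˣ × {p : F × F // nrm p = -1} → T2 :=
    fun uw => ⟨((uw.1 : F) * uw.2.1.1, (uw.1 : F) * uw.2.1.2, (uw.1 : F)), hmem uw.1 uw.2⟩
  have hbij : Function.Bijective Φ := by
    constructor
    · rintro ⟨u, w⟩ ⟨u', w'⟩ hh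
      have h1 := congrArg Subtype.val hh
      simp only [Φ, Prod.mk.injEq] at h1
      obtain ⟨ha, hb, hc⟩ := h1
      have hu : u = u' := Units.ext hc
      subst hu
      refine Prod.ext rfl (Subtype.ext (Prod.ext ?_ ?_))
      · exact mul_left_cancel₀ u.ne_zero ha
      · exact mul_left_cancel₀ u.ne_zero hb
    · rintro ⟨⟨b, c, d⟩, hb, hc, hd, hsum⟩
      refine ⟨⟨Units.mk0 d hd, ⟨(b / d, c / d), ?_⟩⟩, ?_⟩
      · unfold nrm
        simp only
        field_simp
        linear_combination hsum
      · apply Subtype.ext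
        simp only [Φ, Units.val_mk0]
        refine Prod.ext ?_ (Prod.ext ?_ rfl) <;> · simp only; field_simp
  rw [Nat.card_eq_of_bijective Φ hbij |>.symm, Nat.card_prod, Nat.card_units,
    Nat.card_eq_fintype_card, card_W hodd hns]

lemma card_T (hodd : Odd (Fintype.card F)) (hns : ¬ IsSquare (-1 : F)) :
    Nat.card {v : F × F × F // v.1 ≠ 0 ∧ v.2.1 ≠ 0 ∧ v.2.2 ≠ 0 ∧
      v.1 ^ 4 + v.2.1 ^ 4 + v.2.2 ^ 4 = 0} =
    (Fintype.card F - 1) * (Fintype.card F + 1) := by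
  have hbb : Function.Bijective (beta (F := F)) :=
    (Finite.injective_iff_bijective).mp (beta_inj hns)
  rw [← card_T2 hodd hns]
  have hmem : ∀ v : {v : F × F × F // v.1 ≠ 0 ∧ v.2.1 ≠ 0 ∧ v.2.2 ≠ 0 ∧
      v.1 ^ 4 + v.2.1 ^ 4 + v.2.2 ^ 4 = 0},
      (beta v.1.1 ≠ 0 ∧ beta v.1.2.1 ≠ 0 ∧ beta v.1.2.2 ≠ 0 ∧
        beta v.1.1 ^ 2 + beta v.1.2.1 ^ 2 + beta v.1.2.2 ^ 2 = 0) := by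
    intro v
    refine ⟨fun h => v.2.1 (beta_eq_zero_iff.mp h), fun h => v.2.2.1 (beta_eq_zero_iff.mp h),
      fun h => v.2.2.2.1 (beta_eq_zero_iff.mp h), ?_⟩
    rw [beta_sq, beta_sq, beta_sq]
    exact v.2.2.2.2
  let Φ : {v : F × F × F // v.1 ≠ 0 ∧ v.2.1 ≠ 0 ∧ v.2.2 ≠ 0 ∧
      v.1 ^ 4 + v.2.1 ^ 4 + v.2.2 ^ 4 = 0} → {v : F × F × F // v.1 ≠ 0 ∧ v.2.1 ≠ 0 ∧
      v.2.2 ≠ 0 ∧ v.1 ^ 2 + v.2.1 ^ 2 + v.2.2 ^ 2 = 0} :=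
    fun v => ⟨(beta v.1.1, beta v.1.2.1, beta v.1.2.2), hmem v⟩
  apply Nat.card_eq_of_bijective Φ
  constructor
  · intro v v' hh
    have h1 := congrArg Subtype.val hh
    simp only [Φ, Prod.mk.injEq] at h1
    exact Subtype.ext (Prod.ext (hbb.injective h1.1)
      (Prod.ext (hbb.injective h1.2.1) (hbb.injective h1.2.2)))
  · rintro ⟨⟨x, y, z⟩, h1, h2, h3, h4⟩
    obtain ⟨b, hbx⟩ := hbb.surjective x
    obtain ⟨c, hcy⟩ := hbb.surjective y
    obtain ⟨d, hdz⟩ := hbb.surjective z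
    have hb0 : b ≠ 0 := fun h0 => h1 (by rw [← hbx, h0, beta_zero])
    have hc0 : c ≠ 0 := fun h0 => h2 (by rw [← hcy, h0, beta_zero])
    have hd0 : d ≠ 0 := fun h0 => h3 (by rw [← hdz, h0, beta_zero])
    refine ⟨⟨(b, c, d), hb0, hc0, hd0, ?_⟩, ?_⟩
    · simp only
      rw [← beta_sq, ← beta_sq, ← beta_sq, hbx, hcy, hdz]
      exact h4
    · exact Subtype.ext (Prod.ext hbx (Prod.ext hcy hdz))

lemma vec_eq_zero {v : Fin 4 → F} (h0 : v 0 = 0) (h1 : v 1 = 0) (h2 : v 2 = 0)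
    (h3 : v 3 = 0) : v = 0 := by
  funext i
  fin_cases i <;> assumption

lemma card_SA : Nat.card {v : Fin 4 → F | v 0 ≠ 0 ∧ v 1 = 0 ∧ v 2 = 0 ∧ v 3 = 0} =
    Fintype.card F - 1 := by
  rw [← Nat.card_eq_fintype_card (α := F), ← Nat.card_units]
  symm
  apply Nat.card_eq_of_bijective (fun u : Fˣ =>
    (⟨![u, 0, 0, 0], by refine ⟨?_, ?_, ?_, ?_⟩ <;> simp [u.ne_zero]⟩ :
      {v : Fin 4 → F | v 0 ≠ 0 ∧ v 1 = 0 ∧ v 2 = 0 ∧ v 3 = 0}))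
  constructor
  · intro u u' hh
    have := congrArg (fun w => w.1 0) hh
    simpa using Units.ext this
  · rintro ⟨v, h0, h1, h2, h3⟩
    refine ⟨Units.mk0 (v 0) h0, ?_⟩
    apply Subtype.ext
    funext i
    fin_cases i <;> simp [h1, h2, h3]

lemma card_SB : Nat.card {v : Fin 4 → F | v 0 ≠ 0 ∧ v 1 = -v 0 ∧ v 2 = 0 ∧ v 3 = 0} =
    Fintype.card F - 1 := by
  rw [← Nat.card_eq_fintype_card (α := F), ← Nat.card_units]
  symm
  apply Nat.card_eq_of_bijective (fun u : Fˣ =>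
    (⟨![u, -u, 0, 0], by refine ⟨?_, ?_, ?_, ?_⟩ <;> simp [u.ne_zero]⟩ :
      {v : Fin 4 → F | v 0 ≠ 0 ∧ v 1 = -v 0 ∧ v 2 = 0 ∧ v 3 = 0}))
  constructor
  · intro u u' hh
    have := congrArg (fun w => w.1 0) hh
    simpa using Units.ext this
  · rintro ⟨v, h0, h1, h2, h3⟩
    refine ⟨Units.mk0 (v 0) h0, ?_⟩
    apply Subtype.ext
    funext i
    fin_cases i <;> simp [h1, h2, h3]

lemma card_SE (hodd : Odd (Fintype.card F)) (hns : ¬ IsSquare (-1 : F)) :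
    Nat.card {v : Fin 4 → F | v 0 = 0 ∧ v 1 ≠ 0 ∧ v 2 ≠ 0 ∧ v 3 ≠ 0 ∧
      v 1 ^ 4 + v 2 ^ 4 + v 3 ^ 4 = 0} =
    (Fintype.card F - 1) * (Fintype.card F + 1) := by
  rw [← card_T hodd hns]
  apply Nat.card_congr
  refine ⟨fun v => ⟨(v.1 1, v.1 2, v.1 3), v.2.2.1, v.2.2.2.1, v.2.2.2.2.1, v.2.2.2.2.2⟩,
    fun w => ⟨![0, w.1.1, w.1.2.1, w.1.2.2], by
      refine ⟨by simp, ?_, ?_, ?_, ?_⟩ <;> simp [w.2.1, w.2.2.1, w.2.2.2.1, w.2.2.2.2]⟩,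
    ?_, ?_⟩
  · intro v
    apply Subtype.ext
    funext i
    fin_cases i <;> simp [v.2.1.symm]
  · intro w
    apply Subtype.ext
    simp

lemma cube_inj' (h3 : Fintype.card F % 3 ≠ 1) {a b : F} (h : a ^ 3 = b ^ 3) : a = b :=
  (cube_bij h3).injective h

noncomputable def cbrt (h3 : Fintype.card F % 3 ≠ 1) : F ≃ F :=
  Equiv.ofBijective _ (cube_bij h3)

lemma cbrt_apply (h3 : Fintype.card F % 3 ≠ 1) (a : F) : (cbrt h3) a = a ^ 3 := rfl

lemma cbrt_spec (h3 : Fintype.card F % 3 ≠ 1) (a : F) : (cbrt h3).symm a ^ 3 = a := by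
  rw [← cbrt_apply h3]
  exact (cbrt h3).apply_symm_apply a

lemma cbrt_eq_symm (h3 : Fintype.card F % 3 ≠ 1) {a b : F} (h : a ^ 3 = b) :
    (cbrt h3).symm b = a := by
  rw [Equiv.symm_apply_eq, cbrt_apply]
  exact h.symm

lemma card_SC (h3 : Fintype.card F % 3 ≠ 1) (hns : ¬ IsSquare (-1 : F)) :
    Nat.card {v : Fin 4 → F | v 0 ≠ 0 ∧ v 1 ≠ 0 ∧ v 2 ≠ 0 ∧ v 3 = 0 ∧
      v 0 ^ 3 * v 1 + v 1 ^ 4 + v 2 ^ 4 = 0} =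
    (Fintype.card F - 1) * (Fintype.card F - 1) := by
  have hcard : (Fintype.card F - 1) * (Fintype.card F - 1) = Nat.card (Fˣ × Fˣ) := by
    rw [Nat.card_prod, Nat.card_units, Nat.card_eq_fintype_card]
  rw [hcard]
  symm
  have hmem : ∀ uw : Fˣ × Fˣ,
      (![(cbrt h3).symm (-(((uw.1 : F)) ^ 4 + (uw.2 : F) ^ 4) / (uw.1 : F)),
        (uw.1 : F), (uw.2 : F), 0] : Fin 4 → F) ∈
      {v : Fin 4 → F | v 0 ≠ 0 ∧ v 1 ≠ 0 ∧ v 2 ≠ 0 ∧ v 3 = 0 ∧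
        v 0 ^ 3 * v 1 + v 1 ^ 4 + v 2 ^ 4 = 0} := by
    rintro ⟨u, w⟩
    have hsum : ((u : F)) ^ 4 + (w : F) ^ 4 ≠ 0 := fun h =>
      u.ne_zero (pow4_add_pow4_zero hns h).1
    have ht : -(((u : F)) ^ 4 + (w : F) ^ 4) / (u : F) ≠ 0 :=
      div_ne_zero (neg_ne_zero.mpr hsum) u.ne_zero
    refine ⟨?_, by simp [u.ne_zero], by simp [w.ne_zero], by simp, ?_⟩
    · simp only [Matrix.cons_val_zero]
      intro h0
      apply ht
      rw [← cbrt_spec h3 (-(((u : F)) ^ 4 + (w : F) ^ 4) / (u : F)), h0]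
      ring
    · simp only [Matrix.cons_val_zero, Matrix.cons_val_one, Matrix.head_cons]
      rw [cbrt_spec h3]
      field_simp
      change -((u : F) ^ 4 + (w : F) ^ 4) + (u : F) ^ 4 + (w : F) ^ 4 = 0
      ring
  apply Nat.card_eq_of_bijective (fun uw => ⟨_, hmem uw⟩)
  constructor
  · rintro ⟨u, w⟩ ⟨u', w'⟩ hh
    have h1 := congrArg (fun z => z.1 1) hh
    have h2 := congrArg (fun z => z.1 2) hh
    simp only [Matrix.cons_val_one, Matrix.head_cons] at h1 h2
    exact Prod.ext (Units.ext (by simpa using h1)) (Units.ext (by simpa using h2))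
  · rintro ⟨v, h0, h1, h2, h3v, hf⟩
    refine ⟨(Units.mk0 (v 1) h1, Units.mk0 (v 2) h2), ?_⟩
    apply Subtype.ext
    funext i
    have hv0 : (cbrt h3).symm (-((v 1) ^ 4 + (v 2) ^ 4) / (v 1)) = v 0 := by
      apply cbrt_eq_symm
      rw [eq_div_iff h1]
      linear_combination hf
    fin_cases i
    · exact hv0
    · rfl
    · rfl
    · exact h3v.symm

lemma card_SD (h3 : Fintype.card F % 3 ≠ 1) (hns : ¬ IsSquare (-1 : F)) :
    Nat.card {v : Fin 4 → F | v 0 ≠ 0 ∧ v 1 ≠ 0 ∧ v 2 = 0 ∧ v 3 ≠ 0 ∧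
      v 0 ^ 3 * v 1 + v 1 ^ 4 + v 3 ^ 4 = 0} =
    (Fintype.card F - 1) * (Fintype.card F - 1) := by
  have hcard : (Fintype.card F - 1) * (Fintype.card F - 1) = Nat.card (Fˣ × Fˣ) := by
    rw [Nat.card_prod, Nat.card_units, Nat.card_eq_fintype_card]
  rw [hcard]
  symm
  have hmem : ∀ uw : Fˣ × Fˣ,
      (![(cbrt h3).symm (-(((uw.1 : F)) ^ 4 + (uw.2 : F) ^ 4) / (uw.1 : F)),
        (uw.1 : F), 0, (uw.2 : F)] : Fin 4 → F) ∈
      {v : Fin 4 → F | v 0 ≠ 0 ∧ v 1 ≠ 0 ∧ v 2 = 0 ∧ v 3 ≠ 0 ∧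
        v 0 ^ 3 * v 1 + v 1 ^ 4 + v 3 ^ 4 = 0} := by
    rintro ⟨u, w⟩
    have hsum : ((u : F)) ^ 4 + (w : F) ^ 4 ≠ 0 := fun h =>
      u.ne_zero (pow4_add_pow4_zero hns h).1
    have ht : -(((u : F)) ^ 4 + (w : F) ^ 4) / (u : F) ≠ 0 :=
      div_ne_zero (neg_ne_zero.mpr hsum) u.ne_zero
    refine ⟨?_, by simp [u.ne_zero], by simp, by simp [w.ne_zero], ?_⟩
    · simp only [Matrix.cons_val_zero]
      intro h0
      apply ht
      rw [← cbrt_spec h3 (-(((u : F)) ^ 4 + (w : F) ^ 4) / (u : F)), h0]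
      ring
    · show (cbrt h3).symm _ ^ 3 * (u : F) + (u : F) ^ 4 + (w : F) ^ 4 = 0
      rw [cbrt_spec h3]
      field_simp
      ring
  apply Nat.card_eq_of_bijective (fun uw => ⟨_, hmem uw⟩)
  constructor
  · rintro ⟨u, w⟩ ⟨u', w'⟩ hh
    have h1 := congrArg (fun z => z.1 1) hh
    have h2 := congrArg (fun z => z.1 3) hh
    simp only at h1 h2
    exact Prod.ext (Units.ext (by simpa using h1)) (Units.ext (by simpa using h2))
  · rintro ⟨v, h0, h1, h2, h3v, hf⟩
    refine ⟨(Units.mk0 (v 1) h1, Units.mk0 (v 3) h3v), ?_⟩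
    apply Subtype.ext
    funext i
    have hv0 : (cbrt h3).symm (-((v 1) ^ 4 + (v 3) ^ 4) / (v 1)) = v 0 := by
      apply cbrt_eq_symm
      rw [eq_div_iff h1]
      linear_combination hf
    fin_cases i
    · exact hv0
    · rfl
    · exact h2.symm
    · rfl

lemma card_S (hodd : Odd (Fintype.card F)) (h4 : Fintype.card F % 4 ≠ 1)
    (h3 : Fintype.card F % 3 ≠ 1) (ψ : F) :
    Nat.card {v : Fin 4 → F | fC2F2 ψ v = 0 ∧ (∃ j, v j = 0) ∧ v ≠ 0} =
    (3 * Fintype.card F + 1) * (Fintype.card F - 1) := by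
  have hns : ¬ IsSquare (-1 : F) := neg_one_not_square hodd h4
  set SE := {v : Fin 4 → F | v 0 = 0 ∧ v 1 ≠ 0 ∧ v 2 ≠ 0 ∧ v 3 ≠ 0 ∧
      v 1 ^ 4 + v 2 ^ 4 + v 3 ^ 4 = 0} with hSE
  set SA := {v : Fin 4 → F | v 0 ≠ 0 ∧ v 1 = 0 ∧ v 2 = 0 ∧ v 3 = 0} with hSA
  set SB := {v : Fin 4 → F | v 0 ≠ 0 ∧ v 1 = -v 0 ∧ v 2 = 0 ∧ v 3 = 0} with hSB
  set SC := {v : Fin 4 → F | v 0 ≠ 0 ∧ v 1 ≠ 0 ∧ v 2 ≠ 0 ∧ v 3 = 0 ∧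
      v 0 ^ 3 * v 1 + v 1 ^ 4 + v 2 ^ 4 = 0} with hSC
  set SD := {v : Fin 4 → F | v 0 ≠ 0 ∧ v 1 ≠ 0 ∧ v 2 = 0 ∧ v 3 ≠ 0 ∧
      v 0 ^ 3 * v 1 + v 1 ^ 4 + v 3 ^ 4 = 0} with hSD
  have hdecomp : {v : Fin 4 → F | fC2F2 ψ v = 0 ∧ (∃ j, v j = 0) ∧ v ≠ 0} =
      SE ∪ (SA ∪ (SB ∪ (SC ∪ SD))) := by
    ext v
    simp only [Set.mem_setOf_eq, Set.mem_union, hSE, hSA, hSB, hSC, hSD]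
    constructor
    · rintro ⟨hf, ⟨j, hj⟩, hvne⟩
      unfold fC2F2 at hf
      by_cases h0 : v 0 = 0
      · -- SE
        left
        have hsum : v 1 ^ 4 + v 2 ^ 4 + v 3 ^ 4 = 0 := by
          linear_combination hf + (-(v 0) ^ 2 * v 1 + 12 * ψ * (v 1 * v 2 * v 3)) * h0
        by_cases h1 : v 1 = 0
        · exfalso
          have h23 : v 2 ^ 4 + v 3 ^ 4 = 0 := by
            linear_combination hsum - (v 1 ^ 3) * h1
          obtain ⟨h2, h3'⟩ := pow4_add_pow4_zero hns h23
          exact hvne (vec_eq_zero h0 h1 h2 h3')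
        by_cases h2 : v 2 = 0
        · exfalso
          have h13 : v 1 ^ 4 + v 3 ^ 4 = 0 := by
            linear_combination hsum - (v 2 ^ 3) * h2
          obtain ⟨h1', h3'⟩ := pow4_add_pow4_zero hns h13
          exact h1 h1'
        by_cases h3' : v 3 = 0
        · exfalso
          have h12 : v 1 ^ 4 + v 2 ^ 4 = 0 := by
            linear_combination hsum - (v 3 ^ 3) * h3'
          obtain ⟨h1', h2'⟩ := pow4_add_pow4_zero hns h12
          exact h1 h1'
        exact ⟨h0, h1, h2, h3', hsum⟩
      right
      by_cases h1 : v 1 = 0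
      · -- SA
        left
        have h23 : v 2 ^ 4 + v 3 ^ 4 = 0 := by
          linear_combination hf + (-(v 0) ^ 3 - v 1 ^ 3 + 12 * ψ * (v 0 * v 2 * v 3)) * h1
        obtain ⟨h2, h3'⟩ := pow4_add_pow4_zero hns h23
        exact ⟨h0, h1, h2, h3'⟩
      right
      by_cases h2 : v 2 = 0
      · by_cases h3' : v 3 = 0
        · -- SB
          left
          refine ⟨h0, ?_, h2, h3'⟩
          have hcube : v 0 ^ 3 * v 1 + v 1 ^ 4 = 0 := by
            linear_combination hf + (-(v 2) ^ 3 + 12 * ψ * (v 0 * v 1 * v 3)) * h2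
              + (-(v 3) ^ 3) * h3'
          have hfac : v 1 * (v 0 ^ 3 + v 1 ^ 3) = 0 := by linear_combination hcube
          have hz : v 0 ^ 3 + v 1 ^ 3 = 0 := (mul_eq_zero.mp hfac).resolve_left h1
          exact cube_inj' h3 (show v 1 ^ 3 = (-v 0) ^ 3 by linear_combination hz)
        · -- SD
          right; right
          exact ⟨h0, h1, h2, h3', by
            linear_combination hf + (-(v 2) ^ 3 + 12 * ψ * (v 0 * v 1 * v 3)) * h2⟩
      · -- SC : v 3 must be 0
        right; left
        have h3' : v 3 = 0 := by
          fin_cases j <;>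
            first
            | exact absurd hj h0
            | exact absurd hj h1
            | exact absurd hj h2
            | exact hj
        refine ⟨h0, h1, h2, h3', by
          linear_combination hf + (-(v 3) ^ 3 + 12 * ψ * (v 0 * v 1 * v 2)) * h3'⟩
    · rintro (⟨h0, h1, h2, h3', hsum⟩ | ⟨h0, h1, h2, h3'⟩ | ⟨h0, h1, h2, h3'⟩ |
        ⟨h0, h1, h2, h3', hsum⟩ | ⟨h0, h1, h2, h3', hsum⟩)
      · refine ⟨by unfold fC2F2; linear_combination hsum +
          (v 0 ^ 2 * v 1 - 12 * ψ * (v 1 * v 2 * v 3)) * h0, ⟨0, h0⟩,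
          fun hz => h1 (by rw [hz]; rfl)⟩
      · refine ⟨by unfold fC2F2; rw [h1, h2, h3']; ring, ⟨1, h1⟩,
          fun hz => h0 (by rw [hz]; rfl)⟩
      · refine ⟨by unfold fC2F2; rw [h1, h2, h3']; ring, ⟨2, h2⟩,
          fun hz => h0 (by rw [hz]; rfl)⟩
      · refine ⟨by unfold fC2F2; linear_combination hsum +
          (v 3 ^ 3 - 12 * ψ * (v 0 * v 1 * v 2)) * h3', ⟨3, h3'⟩,
          fun hz => h0 (by rw [hz]; rfl)⟩
      · refine ⟨by unfold fC2F2; linear_combination hsum +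
          (v 2 ^ 3 - 12 * ψ * (v 0 * v 1 * v 3)) * h2, ⟨2, h2⟩,
          fun hz => h0 (by rw [hz]; rfl)⟩
  have d1 : Disjoint SE (SA ∪ (SB ∪ (SC ∪ SD))) := by
    rw [Set.disjoint_left]
    rintro v hv (h | h | h | h) <;> exact h.1 hv.1
  have d2 : Disjoint SA (SB ∪ (SC ∪ SD)) := by
    rw [Set.disjoint_left]
    rintro v hv (h | h | h)
    · exact h.1 (neg_eq_zero.mp (h.2.1 ▸ hv.2.1))
    · exact h.2.1 hv.2.1
    · exact h.2.1 hv.2.1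
  have d3 : Disjoint SB (SC ∪ SD) := by
    rw [Set.disjoint_left]
    rintro v hv (h | h)
    · exact h.2.2.1 hv.2.2.1
    · exact h.2.2.2.1 hv.2.2.2
  have d4 : Disjoint SC SD := by
    rw [Set.disjoint_left]
    rintro v hv h
    exact h.2.2.2.1 hv.2.2.2.1
  have cE := card_SE hodd hns
  have cA := card_SA (F := F)
  have cB := card_SB (F := F)
  have cC := card_SC h3 hns
  have cD := card_SD h3 hns
  rw [Nat.card_coe_set_eq] at cE cA cB cC cD
  rw [hdecomp, Nat.card_coe_set_eq]
  rw [Set.ncard_union_eq d1 (Set.toFinite _) (Set.toFinite _)]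
  rw [Set.ncard_union_eq d2 (Set.toFinite _) (Set.toFinite _)]
  rw [Set.ncard_union_eq d3 (Set.toFinite _) (Set.toFinite _)]
  rw [Set.ncard_union_eq d4 (Set.toFinite _) (Set.toFinite _)]
  rw [cE, cA, cB, cC, cD]
  have h2le : 2 ≤ Fintype.card F := Fintype.one_lt_card
  obtain ⟨k, hk⟩ : ∃ k, Fintype.card F = k + 2 := ⟨Fintype.card F - 2, (Nat.sub_add_cancel h2le).symm⟩
  rw [hk]
  have e1 : k + 2 - 1 = k + 1 := rfl
  rw [e1]
  ring

lemma f_smul' (ψ c : F) (v : Fin 4 → F) : fC2F2 ψ (c • v) = c ^ 4 * fC2F2 ψ v := by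
  unfold fC2F2
  simp only [Pi.smul_apply, smul_eq_mul]
  ring

theorem C2F2_boundary_count'' (hodd : Odd (Fintype.card F))
    (h4 : Fintype.card F % 4 ≠ 1) (h3 : Fintype.card F % 3 ≠ 1) (ψ : F) :
    Nat.card {P : Projectivization F (Fin 4 → F) |
        fC2F2 ψ P.rep = 0 ∧ ∃ j, P.rep j = 0} =
      3 * Fintype.card F + 1 := by
  have h2le : 2 ≤ Fintype.card F := Fintype.one_lt_card
  set Pset := {P : Projectivization F (Fin 4 → F) |
      fC2F2 ψ P.rep = 0 ∧ ∃ j, P.rep j = 0} with hPset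
  set S := {v : Fin 4 → F | fC2F2 ψ v = 0 ∧ (∃ j, v j = 0) ∧ v ≠ 0} with hS
  have hmem : ∀ (P : ↥Pset) (c : Fˣ), (c : F) • (P.1.rep) ∈ S := by
    rintro ⟨P, hP1, hP2⟩ c
    refine ⟨by rw [f_smul', hP1, mul_zero], ?_, ?_⟩
    · obtain ⟨j, hj⟩ := hP2
      exact ⟨j, by simp [hj]⟩
    · exact smul_ne_zero c.ne_zero P.rep_nonzero
  let Φ : ↥Pset × Fˣ → ↥S := fun Pc => ⟨_, hmem Pc.1 Pc.2⟩
  have hbij : Function.Bijective Φ := by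
    constructor
    · rintro ⟨⟨P, hP⟩, c⟩ ⟨⟨P', hP'⟩, c'⟩ hh
      have h1 : (c : F) • P.rep = (c' : F) • P'.rep := congrArg Subtype.val hh
      have hPP : P = P' := by
        have e1 : Projectivization.mk F ((c : F) • P.rep)
            (smul_ne_zero c.ne_zero P.rep_nonzero) =
            Projectivization.mk F P.rep P.rep_nonzero :=
          (Projectivization.mk_eq_mk_iff F _ _ _ _).mpr ⟨c, Units.smul_def c P.rep⟩
        have e2 : Projectivization.mk F ((c' : F) • P'.rep)
            (smul_ne_zero c'.ne_zero P'.rep_nonzero) =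
            Projectivization.mk F P'.rep P'.rep_nonzero :=
          (Projectivization.mk_eq_mk_iff F _ _ _ _).mpr ⟨c', Units.smul_def c' P'.rep⟩
        have e3 : Projectivization.mk F ((c : F) • P.rep)
            (smul_ne_zero c.ne_zero P.rep_nonzero) =
            Projectivization.mk F ((c' : F) • P'.rep)
            (smul_ne_zero c'.ne_zero P'.rep_nonzero) :=
          (Projectivization.mk_eq_mk_iff F _ _ _ _).mpr ⟨1, by rw [one_smul, h1]⟩
        rw [← Projectivization.mk_rep P, ← Projectivization.mk_rep P']
        rw [← e1, ← e2, e3]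
      subst hPP
      obtain ⟨j, hj⟩ := Function.ne_iff.mp P.rep_nonzero
      have hcc : (c : F) = (c' : F) := by
        have := congrFun h1 j
        simp only [Pi.smul_apply, smul_eq_mul] at this
        exact mul_right_cancel₀ (by simpa using hj) this
      exact Prod.ext (by rfl) (Units.ext hcc)
    · rintro ⟨v, hf, hex, hvne⟩
      set P := Projectivization.mk F v hvne with hPdef
      obtain ⟨a, ha⟩ := (Projectivization.mk_eq_mk_iff F P.rep v P.rep_nonzero hvne).mp
        (Projectivization.mk_rep P)
      have harep : (a : F) • v = P.rep := by
        rw [← ha]; rfl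
      have hP : P ∈ Pset := by
        constructor
        · rw [← harep, f_smul', hf, mul_zero]
        · obtain ⟨j, hj⟩ := hex
          refine ⟨j, ?_⟩
          rw [← harep]
          simp [hj]
      refine ⟨⟨⟨P, hP⟩, a⁻¹⟩, ?_⟩
      apply Subtype.ext
      show ((a⁻¹ : Fˣ) : F) • P.rep = v
      rw [← harep, smul_smul]
      simp
  have hcards : Nat.card (↥Pset) * Nat.card Fˣ = Nat.card (↥S) := by
    rw [← Nat.card_prod]
    exact Nat.card_eq_of_bijective Φ hbij
  rw [Nat.card_units, Nat.card_eq_fintype_card (α := F), hS, card_S hodd h4 h3 ψ] at hcards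
  exact Nat.eq_of_mul_eq_mul_right (by omega) hcards

end C2F2Aux

/-- For `q ≢ 1 (mod 4)` and `q ≢ 1 (mod 3)`, the number of points of the `C2F2`
pencil in `ℙ³(F_q)` with at least one zero coordinate is `3q + 1`. -/
theorem C2F2_boundary_count (F : Type) [Field F] [Fintype F]
    (hodd : Odd (Fintype.card F))
    (h4 : Fintype.card F % 4 ≠ 1) (h3 : Fintype.card F % 3 ≠ 1) (ψ : F) :
    Nat.card {P : Projectivization F (Fin 4 → F) |
        fC2F2 ψ P.rep = 0 ∧ ∃ j, P.rep j = 0} =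
      3 * Fintype.card F + 1 := by
  exact C2F2Aux.C2F2_boundary_count'' hodd h4 h3 ψ
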